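/- Let G be a finite graph with at least one vertex and let q be a positive integer such that c^q(G) > 0. Then (1/|V(G)|) log c^q(G) = log q − ∫_0^∞ U^q_G(β) dβ; in particular the improper integral ∫_0^∞ U^q_G(β) dβ converges. -/

import Mathlib

noncomputable section

/-- The number of monochromatic edges of `G` under the `q`-colouring `σ`. -/
def monoEdges {V : Type*} (G : SimpleGraph V) {q : ℕ} (σ : V → Fin q) : ℕ :=
  {e ∈ G.edgeSet | ∃ u v, e = s(u, v) ∧ σ u = σ v}.ncard

/-- The `q`-state Potts model partition function at inverse temperature `β`. -/
def pottsZ {V : Type*} [Fintype V] [DecidableEq V] (G : SimpleGraph V) (q : ℕ) (β : ℝ) : ℝ :=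
  ∑ σ : V → Fin q, Real.exp (-β * (monoEdges G σ : ℝ))

/-- The internal energy per particle of the `q`-state Potts model. -/
def pottsU {V : Type*} [Fintype V] [DecidableEq V] (G : SimpleGraph V) (q : ℕ) (β : ℝ) : ℝ :=
  (1 / (Fintype.card V : ℝ)) *
    (∑ σ : V → Fin q, (monoEdges G σ : ℝ) * Real.exp (-β * (monoEdges G σ : ℝ))) / pottsZ G q β

/-- The free energy per particle of the `q`-state Potts model. -/
def pottsF {V : Type*} [Fintype V] [DecidableEq V] (G : SimpleGraph V) (q : ℕ) (β : ℝ) : ℝ :=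
  (1 / (Fintype.card V : ℝ)) * Real.log (pottsZ G q β)

/-- The number of proper `q`-colourings of `G`. -/
def properCount {V : Type*} [Fintype V] [DecidableEq V] (G : SimpleGraph V) (q : ℕ) : ℕ :=
  {σ : V → Fin q | ∀ u v, G.Adj u v → σ u ≠ σ v}.ncard

/-- `G` is `d`-regular: every vertex has exactly `d` neighbours. -/
def IsRegularGraph {V : Type*} (G : SimpleGraph V) (d : ℕ) : Prop :=
  ∀ v, (G.neighborSet v).ncard = d

/-- The complete bipartite graph with two parts of size `d`. -/
def Kdd (d : ℕ) : SimpleGraph (Fin d ⊕ Fin d) := completeBipartiteGraph (Fin d) (Fin d)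

/-- The complete bipartite graph `K_{4,4}`. -/
def K44 : SimpleGraph (Fin 4 ⊕ Fin 4) := completeBipartiteGraph (Fin 4) (Fin 4)

/-- The complete graph `K_5`. -/
def K5 : SimpleGraph (Fin 5) := SimpleGraph.completeGraph (Fin 5)

/-- The disjoint union of `k` copies of a graph `H`. -/
def disjointCopies {W : Type*} (k : ℕ) (H : SimpleGraph W) : SimpleGraph (Fin k × W) where
  Adj a b := a.1 = b.1 ∧ H.Adj a.2 b.2
  symm := ⟨fun _ _ ⟨h1, h2⟩ => ⟨h1.symm, h2.symm⟩⟩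
  loopless := ⟨fun a ⟨_, h2⟩ => H.loopless.irrefl a.2 h2⟩


section Aux
open MeasureTheory Real Filter Set

variable {V : Type*} [Fintype V] [DecidableEq V]

lemma pottsZ_pos (G : SimpleGraph V) (q : ℕ) (hq : 0 < q) (β : ℝ) : 0 < pottsZ G q β := by
  have : Nonempty (Fin q) := Fin.pos_iff_nonempty.mp hq
  exact Finset.sum_pos (fun σ _ => Real.exp_pos _) Finset.univ_nonempty

lemma monoEdges_eq_zero_iff (G : SimpleGraph V) {q : ℕ} (σ : V → Fin q) :
    monoEdges G σ = 0 ↔ ∀ u v, G.Adj u v → σ u ≠ σ v := by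
  rw [monoEdges, Set.ncard_eq_zero (Set.toFinite _)]
  constructor
  · intro h u v hadj hσ
    have : s(u,v) ∈ ({e ∈ G.edgeSet | ∃ u v, e = s(u, v) ∧ σ u = σ v} : Set (Sym2 V)) :=
      ⟨hadj, u, v, rfl, hσ⟩
    simp [h] at this
  · intro h
    ext e
    simp only [Set.mem_setOf_eq, Set.mem_empty_iff_false, iff_false, not_and]
    rintro he ⟨u, v, rfl, hσ⟩
    exact h u v he hσ

lemma hasDerivAt_pottsZ (G : SimpleGraph V) (q : ℕ) (β : ℝ) :
    HasDerivAt (pottsZ G q)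
      (-∑ σ : V → Fin q, (monoEdges G σ : ℝ) * Real.exp (-β * (monoEdges G σ : ℝ))) β := by
  have : HasDerivAt (pottsZ G q)
      (∑ σ : V → Fin q, -((monoEdges G σ : ℝ) * Real.exp (-β * (monoEdges G σ : ℝ)))) β := by
    apply HasDerivAt.fun_sum
    intro σ _
    have h1 : HasDerivAt (fun x : ℝ => -x * (monoEdges G σ : ℝ)) (-(monoEdges G σ : ℝ)) β := by
      simpa using ((hasDerivAt_id β).neg.mul_const (monoEdges G σ : ℝ))
    simpa [mul_comm] using h1.exp
  simpa [Finset.sum_neg_distrib] using this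

lemma tendsto_pottsZ (G : SimpleGraph V) (q : ℕ) :
    Tendsto (pottsZ G q) atTop (nhds (properCount G q : ℝ)) := by
  classical
  have hlim : ∀ σ : V → Fin q, Tendsto (fun β : ℝ => Real.exp (-β * (monoEdges G σ : ℝ)))
      atTop (nhds (if monoEdges G σ = 0 then (1:ℝ) else 0)) := by
    intro σ
    by_cases h : monoEdges G σ = 0
    · simp [h]
    · rw [if_neg h]
      apply Real.tendsto_exp_atBot.comp
      have hn : (0:ℝ) < (monoEdges G σ : ℝ) := by positivity
      have h2 : Tendsto (fun x : ℝ => x * (monoEdges G σ : ℝ)) atTop atTop :=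
        Tendsto.atTop_mul_const hn tendsto_id
      have h3 : Tendsto (fun x : ℝ => -(x * (monoEdges G σ : ℝ))) atTop atBot :=
        tendsto_neg_atTop_atBot.comp h2
      simpa [neg_mul] using h3
  have hsum := tendsto_finset_sum Finset.univ (fun σ _ => hlim σ)
  convert hsum using 2
  · rfl
  rw [Finset.sum_boole]
  rw [properCount, Set.ncard_eq_toFinset_card']
  norm_cast
  congr 1
  ext σ
  simp [monoEdges_eq_zero_iff]

end Aux

theorem stmt12 {V : Type*} [Fintype V] [DecidableEq V] [Nonempty V]
    (G : SimpleGraph V) (q : ℕ) (hq : 0 < q) (hc : 0 < properCount G q) :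
    MeasureTheory.IntegrableOn (fun β => pottsU G q β) (Set.Ioi (0:ℝ)) ∧
      (1 / (Fintype.card V : ℝ)) * Real.log (properCount G q) =
        Real.log q - ∫ β in Set.Ioi (0:ℝ), pottsU G q β := by
  classical
  open MeasureTheory Real Filter Set in
  set N : ℝ := (Fintype.card V : ℝ) with hN
  have hNpos : (0:ℝ) < N := by
    simp only [hN]
    exact_mod_cast Fintype.card_pos
  set g : ℝ → ℝ := fun β => -(1 / N) * Real.log (pottsZ G q β) with hg
  have hCpos : (0:ℝ) < (properCount G q : ℝ) := by exact_mod_cast hc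
  have hderiv : ∀ x ∈ Set.Ici (0:ℝ), HasDerivAt g (pottsU G q x) x := by
    intro x _
    have hZ := hasDerivAt_pottsZ G q x
    have hZpos := pottsZ_pos G q hq x
    have hlog := (Real.hasDerivAt_log hZpos.ne').comp x hZ
    have := hlog.const_mul (-(1 / N))
    refine HasDerivAt.congr_deriv this ?_
    rw [pottsU, ← hN, div_eq_mul_inv]
    ring
  have g'pos : ∀ x ∈ Set.Ioi (0:ℝ), 0 ≤ pottsU G q x := by
    intro x _
    rw [pottsU]
    apply div_nonneg _ (pottsZ_pos G q hq x).le
    apply mul_nonneg (by positivity)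
    exact Finset.sum_nonneg fun σ _ => mul_nonneg (by positivity) (Real.exp_pos _).le
  have hgl : Filter.Tendsto g Filter.atTop
      (nhds (-(1 / N) * Real.log (properCount G q : ℝ))) := by
    apply Filter.Tendsto.const_mul
    exact ((Real.continuousAt_log hCpos.ne').tendsto).comp (tendsto_pottsZ G q)
  have hint : MeasureTheory.IntegrableOn (fun β => pottsU G q β) (Set.Ioi (0:ℝ)) :=
    MeasureTheory.integrableOn_Ioi_deriv_of_nonneg' hderiv g'pos hgl
  refine ⟨hint, ?_⟩
  have hval := MeasureTheory.integral_Ioi_of_hasDerivAt_of_nonneg' hderiv g'pos hgl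
  rw [hval]
  have hZ0 : pottsZ G q 0 = (q : ℝ) ^ Fintype.card V := by
    rw [pottsZ]
    simp [Finset.card_univ, Fintype.card_fun]
  have hg0 : g 0 = -Real.log q := by
    rw [hg]
    simp only [hZ0]
    rw [Real.log_pow]
    field_simp
    ring
  rw [hg0]
  ring
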